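/- Define S(m) = ∑_{k=0}^{m} k!·C(m,k). Then for all m ≥ 2, S(m) - (m+1)·S(m-1) + (m-1)·S(m-2) = 0. -/

import Mathlib

def S (m : ℕ) : ℕ := ∑ k ∈ Finset.range (m + 1), (Nat.factorial k) * Nat.choose m k

lemma S_succ (n : ℕ) : S (n + 1) = (n + 1) * S n + 1 := by
  have h : ∀ m k : ℕ, Nat.factorial k * Nat.choose m k = Nat.descFactorial m k := by
    intro m k
    rw [Nat.descFactorial_eq_factorial_mul_choose]
  unfold S
  simp only [h]
  rw [Finset.sum_range_succ']
  simp only [Nat.succ_descFactorial_succ, Nat.descFactorial_zero, ← Finset.mul_sum]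

theorem S_recurrence : ∀ m : ℕ, 2 ≤ m →
    (S m : ℤ) - (m + 1) * S (m - 1) + (m - 1) * S (m - 2) = 0 := by
  rintro m hm
  obtain ⟨n, rfl⟩ : ∃ n, m = n + 2 := ⟨m - 2, by omega⟩
  have h1 := S_succ (n + 1)
  have h2 := S_succ n
  simp only [show n + 2 - 1 = n + 1 from rfl, show n + 2 - 2 = n from rfl, h1, h2]
  push_cast
  ring
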